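/- Suppose there exists v₀ ∈ [0,1] with g(v₀) = 0, and let v : [0,∞) → ℝ be the solution of the ODE v'(t) + ε^{1−α} g(v(t)) = 0 with v(0) = 0. Then v₀ − 1 ≤ v(t) ≤ v₀ for every t ≥ 0, and consequently lim_{t→∞} v(t)/t = 0, i.e. c_ε(0) = 0. -/

import Mathlib

open Filter Set

/-- Helper: if `g c = 0` and the solution hits `c` at time `s`, it stays at `c` afterwards. -/
lemma stay_at_zero (α ε : ℝ) (hε : 0 < ε)
    (g : ℝ → ℝ) (L : NNReal) (hgLip : LipschitzWith L g)
    (c : ℝ) (hgc : g c = 0)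
    (v : ℝ → ℝ)
    (hode : ∀ t, 0 ≤ t → HasDerivAt v (-(ε ^ (1 - α) * g (v t))) t)
    (s : ℝ) (hs : 0 ≤ s) (hvs : v s = c)
    (t : ℝ) (ht : s ≤ t) : v t = c := by
  set κ : ℝ := ε ^ (1 - α) with hκ
  have hκ0 : 0 ≤ κ := Real.rpow_nonneg hε.le _
  have hLip : LipschitzWith (⟨κ, hκ0⟩ * L) (fun x => -(κ * g x)) := by
    apply LipschitzWith.of_dist_le_mul
    intro x y
    have := hgLip.dist_le_mul x y
    simp only [Real.dist_eq] at *
    have heq : -(κ * g x) - -(κ * g y) = κ * (g y - g x) := by ring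
    calc |-(κ * g x) - -(κ * g y)| = κ * |g x - g y| := by
          rw [heq, abs_mul, abs_of_nonneg hκ0, abs_sub_comm]
      _ ≤ κ * (L * |x - y|) := mul_le_mul_of_nonneg_left this hκ0
      _ = (⟨κ, hκ0⟩ * L : NNReal) * |x - y| := by push_cast; change κ * (↑L * |x - y|) = (κ * ↑L) * |x - y|; ring
  have hcont : ContinuousOn v (Icc s t) := by
    intro x hx
    exact ((hode x (hs.trans hx.1)).continuousAt).continuousWithinAt
  have := ODE_solution_unique_of_mem_Icc_right
    (v := fun _ x => -(κ * g x)) (s := fun _ => (univ : Set ℝ))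
    (K := ⟨κ, hκ0⟩ * L) (f := v) (g := fun _ => c) (a := s) (b := t)
    (fun _ _ => hLip.lipschitzOnWith) hcont
    (fun x hx => ((hode x (hs.trans hx.1)).hasDerivWithinAt))
    (fun _ _ => mem_univ _) (continuousOn_const)
    (fun x _ => by
      simpa [hgc] using (hasDerivWithinAt_const x (Ici x) c))
    (fun _ _ => mem_univ _) (by simp [hvs])
  exact this ⟨ht, le_refl t⟩

theorem ode_speed_zero_when_g_has_zero
    (α ε : ℝ) (hα : 0 ≤ α ∧ α < 1) (hε : 0 < ε ∧ ε ≤ 1)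
    (g : ℝ → ℝ) (L : NNReal)
    (hgLip : LipschitzWith L g)
    (hgper : ∀ s, g (s + 1) = g s)
    (hgneg : ∀ s, g s ≤ 0)
    (v₀ : ℝ) (hv₀ : v₀ ∈ Set.Icc (0:ℝ) 1) (hgv₀ : g v₀ = 0)
    (v : ℝ → ℝ)
    (hode : ∀ t, 0 ≤ t → HasDerivAt v (-(ε ^ (1 - α) * g (v t))) t)
    (hv0 : v 0 = 0) :
    (∀ t, 0 ≤ t → v₀ - 1 ≤ v t ∧ v t ≤ v₀) ∧
      Tendsto (fun t => v t / t) atTop (nhds 0) ∧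
      ∀ c : ℝ, (∃ K, ∀ t, 0 ≤ t → |v t - c * t| ≤ K) → c = 0 := by
  have hgv₀' : g (v₀ - 1) = 0 := by
    have h := hgper (v₀ - 1)
    rw [sub_add_cancel] at h
    rw [← h]; exact hgv₀
  have hcontIcc : ∀ t : ℝ, 0 ≤ t → ContinuousOn v (Icc 0 t) := fun t _ x hx =>
    ((hode x hx.1).continuousAt).continuousWithinAt
  -- bounds
  have hbound : ∀ t, 0 ≤ t → v₀ - 1 ≤ v t ∧ v t ≤ v₀ := by
    intro t ht
    constructor
    · by_contra h
      push_neg at h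
      have hmem : v₀ - 1 ∈ Icc (v t) (v 0) := ⟨h.le, by rw [hv0]; linarith [hv₀.2]⟩
      obtain ⟨s, hsmem, hvs⟩ := intermediate_value_Icc' ht (hcontIcc t ht) hmem
      have := stay_at_zero α ε hε.1 g L hgLip (v₀ - 1) hgv₀' v hode s hsmem.1 hvs t hsmem.2
      linarith
    · by_contra h
      push_neg at h
      have hmem : v₀ ∈ Icc (v 0) (v t) := ⟨by rw [hv0]; exact hv₀.1, h.le⟩
      obtain ⟨s, hsmem, hvs⟩ := intermediate_value_Icc ht (hcontIcc t ht) hmem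
      have := stay_at_zero α ε hε.1 g L hgLip v₀ hgv₀ v hode s hsmem.1 hvs t hsmem.2
      linarith
  have habs : ∀ t, 0 ≤ t → |v t| ≤ 1 := by
    intro t ht
    obtain ⟨h1, h2⟩ := hbound t ht
    rw [abs_le]
    exact ⟨by linarith [hv₀.1], by linarith [hv₀.2]⟩
  refine ⟨hbound, ?_, ?_⟩
  · apply squeeze_zero_norm' (a := fun t : ℝ => 1 / t)
    · filter_upwards [eventually_ge_atTop (1 : ℝ)] with t ht
      have ht0 : (0:ℝ) < t := lt_of_lt_of_le one_pos ht
      rw [Real.norm_eq_abs, abs_div, abs_of_pos ht0]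
      gcongr
      exact habs t ht0.le
    · simpa [one_div] using (tendsto_inv_atTop_zero : Tendsto (fun t : ℝ => t⁻¹) atTop (nhds 0))
  · intro c ⟨K, hK⟩
    by_contra hc
    have hK0 : 0 ≤ K := by
      have h0 := hK 0 le_rfl
      simp [hv0] at h0
      exact h0
    have hcpos : 0 < |c| := abs_pos.mpr hc
    set t := (K + 2) / |c| with htdef
    have ht0 : 0 ≤ t := div_nonneg (by linarith) hcpos.le
    have h1 := hK t ht0
    have h2 := habs t ht0
    have h3 : |c * t| ≤ |v t - c * t| + |v t| := by
      have := abs_sub_abs_le_abs_sub (c * t) (v t)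
      have h4 := abs_sub_comm (v t) (c * t)
      calc |c * t| ≤ |c * t - v t| + |v t| := by
            have := abs_add_le (c * t - v t) (v t); simpa using this
        _ = |v t - c * t| + |v t| := by rw [abs_sub_comm]
    have h5 : |c * t| = K + 2 := by
      rw [abs_mul, abs_of_nonneg ht0, htdef, mul_div_cancel₀ _ (ne_of_gt hcpos)]
    linarith
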